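/- If A and B are CR sets in semigroups S and T respectively, then A × B is a CR set in the product semigroup S × T. -/

import Mathlib

open Finset

/-- The word `a 0 * f (t 0) * a 1 * f (t 1) * ⋯ * a (m-1) * f (t (m-1)) * a m`. -/
def crWord {S : Type*} [Semigroup S] (m : ℕ) (a : Fin (m + 1) → S) (t : Fin m → ℕ)
    (f : ℕ → S) : S :=
  (List.finRange m).foldl (fun x i => x * f (t i) * a i.succ) (a 0)

/-- `A` is a combinatorially rich (CR) set in the semigroup `S`. -/
def IsCRSet {S : Type*} [Semigroup S] (A : Set S) : Prop :=
  ∀ k : ℕ, ∃ r : ℕ, ∀ F : Finset (ℕ → S), F.Nonempty → F.card ≤ k →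
    ∃ m : ℕ, 0 < m ∧ ∃ a : Fin (m + 1) → S, ∃ t : Fin m → ℕ,
      StrictMono t ∧ (∀ i, t i ≤ r) ∧ ∀ f ∈ F, crWord m a t f ∈ A

/-- An increasing block sequence of nonempty finite subsets of ℕ:
each block is nonempty and every element of an earlier block is less
than every element of a later block (equivalently `max H_n < min H_{n+1}`). -/
def BlockSeq {r : ℕ} (H : Fin r → Finset ℕ) : Prop :=
  (∀ n, (H n).Nonempty) ∧ ∀ i j : Fin r, i < j → ∀ x ∈ H i, ∀ y ∈ H j, x < y

/-- Finite unions of a finite block sequence. -/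
def FU {r : ℕ} (H : Fin r → Finset ℕ) : Set (Finset ℕ) :=
  {L | ∃ K : Finset (Fin r), K.Nonempty ∧ L = K.biUnion H}

def IsIPr (r : ℕ) (B : Set (Finset ℕ)) : Prop :=
  ∃ H : Fin r → Finset ℕ, BlockSeq H ∧ B = FU H

def IsIPrStar (r : ℕ) (A : Set (Finset ℕ)) : Prop :=
  ∀ B : Set (Finset ℕ), IsIPr r B → (A ∩ B).Nonempty

def BlockSeqInf (H : ℕ → Finset ℕ) : Prop :=
  (∀ n, (H n).Nonempty) ∧ ∀ i j : ℕ, i < j → ∀ x ∈ H i, ∀ y ∈ H j, x < y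

def IsIP (B : Set (Finset ℕ)) : Prop :=
  ∃ H : ℕ → Finset ℕ, BlockSeqInf H ∧
    B = {L | ∃ K : Finset ℕ, K.Nonempty ∧ L = K.biUnion H}

def IsIPStar (A : Set (Finset ℕ)) : Prop :=
  ∀ B : Set (Finset ℕ), IsIP B → (A ∩ B).Nonempty

/-- `Θ(A,F)`: the nonempty finite sets `L = {t(1) < … < t(m)}` for which there is
`a ∈ S^{m+1}` with `a(1)·f(t(1))·a(2)⋯a(m)·f(t(m))·a(m+1) ∈ A` for all `f ∈ F`. -/
def Theta {S : Type*} [Semigroup S] (A : Set S) (F : Finset (ℕ → S)) : Set (Finset ℕ) :=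
  {L | L.Nonempty ∧ ∃ a : Fin (L.card + 1) → S,
    ∀ f ∈ F, crWord L.card a (fun i => ((L.orderIsoOfFin rfl) i : ℕ)) f ∈ A}

section Words
variable {S : Type*} [Semigroup S]

def wd (f : ℕ → S) (h : S) (l : List (ℕ × S)) : S :=
  l.foldl (fun x p => x * f p.1 * p.2) h

lemma wd_cons (f : ℕ → S) (h : S) (p : ℕ × S) (l : List (ℕ × S)) :
    wd f h (p :: l) = wd f (h * f p.1 * p.2) l := rfl

lemma wd_append (f : ℕ → S) (h : S) (l₁ l₂ : List (ℕ × S)) :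
    wd f h (l₁ ++ l₂) = wd f (wd f h l₁) l₂ := List.foldl_append ..

def decor (s₀ : S) : List ℕ → S → List (ℕ × S)
  | [], _ => []
  | [n], b => [(n, b)]
  | n :: m :: l, b => (n, s₀) :: decor s₀ (m :: l) b

def blockProd (f : ℕ → S) (s₀ : S) : List ℕ → S
  | [] => s₀
  | [n] => f n
  | n :: m :: l => f n * s₀ * blockProd f s₀ (m :: l)

lemma decor_fst (s₀ : S) (l : List ℕ) (b : S) : (decor s₀ l b).map Prod.fst = l := by
  induction l with
  | nil => rfl
  | cons n l ih =>
    cases l with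
    | nil => rfl
    | cons m l' => simpa [decor] using ih

lemma wd_decor (f : ℕ → S) (s₀ : S) (b : S) (n : ℕ) (l : List ℕ) (h : S) :
    wd f h (decor s₀ (n :: l) b) = h * blockProd f s₀ (n :: l) * b := by
  induction l generalizing h n with
  | nil => rfl
  | cons m l' ih =>
    rw [decor, wd_cons, ih, blockProd]
    simp [mul_assoc]

lemma crWord_eq_wd (m : ℕ) (a : Fin (m + 1) → S) (t : Fin m → ℕ) (f : ℕ → S) :
    crWord m a t f = wd f (a 0) ((List.finRange m).map fun i => (t i, a i.succ)) := by
  rw [crWord, wd, List.foldl_map]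

lemma fold_cast {β : Type*} {n n' : ℕ} (hnn : n = n') (G : β → Fin n' → β) (init : β) :
    List.foldl G init (List.finRange n') =
      List.foldl (fun x i => G x (Fin.cast hnn i)) init (List.finRange n) := by
  subst hnn; rfl

lemma theta_of_list {A : Set S} {F : Finset (ℕ → S)} (h : S) (l : List (ℕ × S))
    (hne : l ≠ []) (hsort : (l.map Prod.fst).Pairwise (· < ·))
    (hw : ∀ f ∈ F, wd f h l ∈ A) :
    (l.map Prod.fst).toFinset ∈ Theta A F := by
  classical
  set L := (l.map Prod.fst).toFinset with hL
  have hnodup : (l.map Prod.fst).Nodup := hsort.nodup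
  have hcard : L.card = l.length := by
    rw [hL, List.toFinset_card_of_nodup hnodup, List.length_map]
  have hlen : l.length = L.card := hcard.symm
  set e : Fin L.card → ℕ := fun i => (l.get (Fin.cast hcard i)).1 with he
  have hmem : ∀ i, e i ∈ L := by
    intro i
    rw [hL]
    simp only [he, List.mem_toFinset, List.get_eq_getElem]
    exact List.mem_map_of_mem (f := Prod.fst) (List.getElem_mem _)
  have hmono : StrictMono e := by
    intro i j hij
    have h1 : (i : ℕ) < (l.map Prod.fst).length := by
      simp only [List.length_map]; omega
    have h2 : (j : ℕ) < (l.map Prod.fst).length := by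
      simp only [List.length_map]; omega
    have := (List.pairwise_iff_getElem.1 hsort) i j h1 h2 hij
    simpa [he, List.getElem_map] using this
  have henum : ∀ i : Fin L.card, ((L.orderIsoOfFin rfl) i : ℕ) = e i := by
    have huniq := Finset.orderEmbOfFin_unique (s := L) rfl hmem hmono
    intro i
    rw [Finset.coe_orderIsoOfFin_apply, ← huniq]
  have hLne : L.Nonempty := by
    rcases l with _ | ⟨p, l'⟩
    · exact absurd rfl hne
    · exact ⟨p.1, by simp [hL]⟩
  refine ⟨hLne, Fin.cases h (fun i => (l.get (Fin.cast hcard i)).2), fun f hf => ?_⟩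
  have key : crWord L.card (Fin.cases h (fun i => (l.get (Fin.cast hcard i)).2))
      (fun i => ((L.orderIsoOfFin rfl) i : ℕ)) f = wd f h l := by
    rw [crWord, fold_cast hlen]
    rw [wd]
    conv_rhs => rw [← List.map_get_finRange l, List.foldl_map]
    congr 1
    funext x i
    rw [henum]
    simp only [he, Fin.cases_succ]
    rfl
  rw [key]
  exact hw f hf

end Words

section Ramsey

def phi (L : Finset ℕ) : ℕ := ∑ i ∈ L, 3 ^ i

lemma sum_digits_lt (c : ℕ → ℕ) (hc : ∀ i, c i ≤ 2) (N : ℕ) :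
    ∑ i ∈ range N, c i * 3 ^ i < 3 ^ N := by
  induction N with
  | zero => simp
  | succ N ih =>
    rw [Finset.sum_range_succ, pow_succ]
    have h1 := Nat.mul_le_mul_right (3 ^ N) (hc N)
    omega

lemma digits_unique (c d : ℕ → ℕ) (hc : ∀ i, c i ≤ 2) (hd : ∀ i, d i ≤ 2) :
    ∀ N, ∑ i ∈ range N, c i * 3 ^ i = ∑ i ∈ range N, d i * 3 ^ i →
    ∀ i < N, c i = d i := by
  intro N
  induction N with
  | zero => intro _ i hi; omega
  | succ N ih =>
    intro h
    rw [Finset.sum_range_succ, Finset.sum_range_succ] at h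
    have hclt := sum_digits_lt c hc N
    have hdlt := sum_digits_lt d hd N
    have hcd : c N = d N := by
      by_contra hne
      rcases Nat.lt_or_ge (c N) (d N) with hlt | hge
      · have h2 : (c N + 1) * 3 ^ N ≤ d N * 3 ^ N :=
          Nat.mul_le_mul_right (3 ^ N) (Nat.succ_le_of_lt hlt)
        have h3 : (c N + 1) * 3 ^ N = c N * 3 ^ N + 3 ^ N := by ring
        omega
      · have hlt2 : d N < c N := by omega
        have h2 : (d N + 1) * 3 ^ N ≤ c N * 3 ^ N :=
          Nat.mul_le_mul_right (3 ^ N) (Nat.succ_le_of_lt hlt2)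
        have h3 : (d N + 1) * 3 ^ N = d N * 3 ^ N + 3 ^ N := by ring
        omega
    intro i hi
    have hEq : ∑ i ∈ range N, c i * 3 ^ i = ∑ i ∈ range N, d i * 3 ^ i := by
      have : c N * 3 ^ N = d N * 3 ^ N := by rw [hcd]
      omega
    rcases Nat.lt_or_ge i N with h' | h'
    · exact ih hEq i h'
    · have : i = N := by omega
      subst this; exact hcd

lemma phi_eq_digits (L : Finset ℕ) (N : ℕ) (hN : ∀ i ∈ L, i < N) :
    phi L = ∑ i ∈ range N, (if i ∈ L then 1 else 0) * 3 ^ i := by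
  classical
  rw [phi]
  calc ∑ i ∈ L, 3 ^ i = ∑ i ∈ L, (if i ∈ L then 1 else 0) * 3 ^ i :=
        Finset.sum_congr rfl (fun i hi => by simp [hi])
    _ = ∑ i ∈ range N, (if i ∈ L then 1 else 0) * 3 ^ i :=
        Finset.sum_subset (fun i hi => Finset.mem_range.2 (hN i hi))
          (fun x _ hx => by simp [hx])

lemma phi_inj {u v : Finset ℕ} (h : phi u = phi v) : u = v := by
  classical
  set N := (u ∪ v).sup id + 1 with hNdef
  have hu : ∀ i ∈ u, i < N := fun i hi => by
    have : i ≤ (u ∪ v).sup id := Finset.le_sup (f := id) (Finset.mem_union_left _ hi)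
    omega
  have hv : ∀ i ∈ v, i < N := fun i hi => by
    have : i ≤ (u ∪ v).sup id := Finset.le_sup (f := id) (Finset.mem_union_right _ hi)
    omega
  rw [phi_eq_digits u N hu, phi_eq_digits v N hv] at h
  have := digits_unique _ _ (fun i => by split <;> omega) (fun i => by split <;> omega) N h
  ext i
  by_cases hiN : i < N
  · have := this i hiN
    by_cases h1 : i ∈ u <;> by_cases h2 : i ∈ v <;> simp [h1, h2] at this ⊢
  · constructor <;> intro hmem
    · exact absurd (hu i hmem) hiN
    · exact absurd (hv i hmem) hiN

lemma phi_disjoint {u v w : Finset ℕ} (h : phi u + phi v = phi w) : Disjoint u v := by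
  classical
  set N := (u ∪ v ∪ w).sup id + 1 with hNdef
  have hb : ∀ (x : Finset ℕ), x ⊆ u ∪ v ∪ w → ∀ i ∈ x, i < N := by
    intro x hx i hi
    have : i ≤ (u ∪ v ∪ w).sup id := Finset.le_sup (f := id) (hx hi)
    omega
  have hu : ∀ i ∈ u, i < N := hb u (fun i hi => by simp [hi]) 
  have hv : ∀ i ∈ v, i < N := hb v (fun i hi => by simp [hi])
  have hw : ∀ i ∈ w, i < N := hb w (fun i hi => by simp [hi])
  rw [phi_eq_digits u N hu, phi_eq_digits v N hv, phi_eq_digits w N hw] at h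
  rw [← Finset.sum_add_distrib] at h
  have h' : ∑ i ∈ range N, ((if i ∈ u then 1 else 0) + (if i ∈ v then 1 else 0)) * 3 ^ i
      = ∑ i ∈ range N, (if i ∈ w then 1 else 0) * 3 ^ i := by
    rw [← h]; congr 1; ext i; ring
  have key := digits_unique _ _ (fun i => by split <;> split <;> omega)
    (fun i => by split <;> omega) N h'
  rw [Finset.disjoint_left]
  intro i hiu hiv
  have hi := key i (hu i hiu)
  simp [hiu, hiv] at hi
  split at hi <;> omega

lemma phi_union {u v : Finset ℕ} (h : Disjoint u v) : phi (u ∪ v) = phi u + phi v := by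
  rw [phi, phi, phi, Finset.sum_union h]

lemma phi_pos {u : Finset ℕ} (h : u.Nonempty) : 0 < phi u := by
  rcases h with ⟨i, hi⟩
  exact lt_of_lt_of_le (Nat.pow_pos (n := i) (by norm_num))
    (Finset.single_le_sum (f := fun i => 3 ^ i) (fun j _ => Nat.zero_le _) hi)

/-- The stream of powers of 3. -/
def pw3 : Stream' ℕ := fun i => 3 ^ i

lemma FS_pw3_char :
    ∀ {s : Stream' ℕ} {x : ℕ}, x ∈ Hindman.FS s → ∀ k, s = Stream'.drop k pw3 →
    ∃ L : Finset ℕ, L.Nonempty ∧ (∀ i ∈ L, k ≤ i) ∧ x = phi L := by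
  intro s x hx
  induction hx with
  | head' a =>
    intro k hk
    refine ⟨{k}, Finset.singleton_nonempty k, by simp, ?_⟩
    subst hk
    rw [Stream'.head_drop]
    simp [phi, pw3, Stream'.get]
  | tail' a m h ih =>
    intro k hk
    have : a.tail = Stream'.drop (k + 1) pw3 := by
      subst hk
      rw [Stream'.tail_drop]
      ext i
      simp [Stream'.get_drop, Stream'.get_tail, Nat.add_right_comm]
    rcases ih (k + 1) this with ⟨L, h1, h2, h3⟩
    exact ⟨L, h1, fun i hi => by have := h2 i hi; omega, h3⟩
  | cons' a m h ih =>
    intro k hk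
    have : a.tail = Stream'.drop (k + 1) pw3 := by
      subst hk
      rw [Stream'.tail_drop]
      ext i
      simp [Stream'.get_drop, Stream'.get_tail, Nat.add_right_comm]
    rcases ih (k + 1) this with ⟨L, h1, h2, h3⟩
    have hknotin : k ∉ L := fun hmem => by have := h2 k hmem; omega
    refine ⟨insert k L, Finset.insert_nonempty _ _, ?_, ?_⟩
    · intro i hi
      rcases Finset.mem_insert.1 hi with rfl | hi
      · exact le_rfl
      · have := h2 i hi; omega
    · subst hk
      rw [Stream'.head_drop]
      rw [phi, Finset.sum_insert hknotin]
      rw [h3, phi]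
      simp [pw3, Stream'.get]

lemma mem_FS_pw3 {x : ℕ} (hx : x ∈ Hindman.FS pw3) :
    ∃ L : Finset ℕ, L.Nonempty ∧ x = phi L := by
  rcases FS_pw3_char hx 0 (by rw [Stream'.drop_zero]) with ⟨L, h1, _, h3⟩
  exact ⟨L, h1, h3⟩

end Ramsey

section InfRamsey

/-- From pairwise disjoint nonempty finite sets one can find, beyond any index and any bound,
a set all of whose elements exceed the bound. -/
lemma exists_far (Lf : ℕ → Finset ℕ)
    (hdisj : ∀ i j, i ≠ j → Disjoint (Lf i) (Lf j)) (i M : ℕ) :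
    ∃ j, i < j ∧ ∀ x ∈ Lf j, M < x := by
  classical
  by_contra hcon
  push_neg at hcon
  -- every j > i has an element ≤ M
  have hx : ∀ j ∈ Finset.Ioc i (i + M + 2), ∃ x, x ∈ Lf j ∧ x ≤ M := by
    intro j hj
    rcases hcon j (Finset.mem_Ioc.1 hj).1 with ⟨x, hx1, hx2⟩
    exact ⟨x, hx1, by omega⟩
  choose g hg1 hg2 using hx
  have hinj : ∀ j₁ (h₁ : j₁ ∈ Finset.Ioc i (i + M + 2)), ∀ j₂ (h₂ : j₂ ∈ Finset.Ioc i (i + M + 2)),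
      g j₁ h₁ = g j₂ h₂ → j₁ = j₂ := by
    intro j₁ h₁ j₂ h₂ heq
    by_contra hne
    have := hdisj j₁ j₂ hne
    exact Finset.disjoint_left.1 this (hg1 j₁ h₁) (heq ▸ hg1 j₂ h₂)
  have hcard := Finset.card_le_card_of_injOn (fun j => if h : j ∈ Finset.Ioc i (i + M + 2) then g j h else 0)
    (s := Finset.Ioc i (i + M + 2)) (t := Finset.range (M + 1)) ?_ ?_
  · rw [Nat.card_Ioc, Finset.card_range] at hcard
    omega
  · intro j hj
    show (if h : j ∈ Finset.Ioc i (i + M + 2) then g j h else 0) ∈ Finset.range (M + 1)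
    rw [Finset.mem_coe] at hj
    rw [dif_pos hj]
    exact Finset.mem_range.2 (by have := hg2 j hj; omega)
  · intro j₁ h₁ j₂ h₂ heq
    rw [Finset.mem_coe] at h₁ h₂
    have heq' : (if h : j₁ ∈ Finset.Ioc i (i + M + 2) then g j₁ h else 0) =
        (if h : j₂ ∈ Finset.Ioc i (i + M + 2) then g j₂ h else 0) := heq
    rw [dif_pos h₁, dif_pos h₂] at heq'
    exact hinj j₁ h₁ j₂ h₂ heq'

/-- Infinite block-unions Ramsey theorem, finite-coloring into two cells,
length-n conclusion. -/
lemma block_ramsey_inf (C : Set (Finset ℕ)) (n : ℕ) :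
    ∃ K : Fin n → Finset ℕ, BlockSeq K ∧
      ((∀ J : Finset (Fin n), J.Nonempty → J.biUnion K ∈ C) ∨
       (∀ J : Finset (Fin n), J.Nonempty → J.biUnion K ∉ C)) := by
  classical
  set P : Set ℕ := phi '' C with hP
  obtain ⟨c, hc, b, hb⟩ := Hindman.FS_partition_regular pw3
    {Hindman.FS pw3 ∩ P, Hindman.FS pw3 \ P}
    ((Set.finite_singleton _).insert _)
    (by intro x hx
        by_cases hxP : x ∈ P
        · exact Set.mem_sUnion.2 ⟨_, Set.mem_insert _ _, hx, hxP⟩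
        · exact Set.mem_sUnion.2 ⟨_, Set.mem_insert_iff.2 (Or.inr rfl), hx, hxP⟩)
  have hbFS : ∀ x ∈ Hindman.FS b, x ∈ Hindman.FS pw3 := by
    intro x hx
    rcases hc with rfl | hceq
    · exact (hb hx).1
    · rw [Set.mem_singleton_iff.1 hceq] at hb
      exact (hb hx).1
  -- decode each b i
  have hdec : ∀ j : ℕ, ∃ L : Finset ℕ, L.Nonempty ∧ b.get j = phi L := by
    intro j
    exact mem_FS_pw3 (hbFS _ (Hindman.FS.singleton b j))
  choose Lf hLne hLphi using hdec
  -- pairwise disjointness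
  have hdisj : ∀ i j, i ≠ j → Disjoint (Lf i) (Lf j) := by
    have key : ∀ i j, i < j → Disjoint (Lf i) (Lf j) := by
      intro i j hij
      have hsum : b.get i + b.get j ∈ Hindman.FS pw3 :=
        hbFS _ (Hindman.FS.add_two b i j hij)
      rcases mem_FS_pw3 hsum with ⟨W, _, hW⟩
      rw [hLphi i, hLphi j] at hW
      exact phi_disjoint hW
    intro i j hij
    rcases Nat.lt_or_ge i j with h | h
    · exact key i j h
    · exact (key j i (by omega)).symm
  -- sums over index sets
  have hsum : ∀ J : Finset ℕ, ∑ j ∈ J, b.get j = phi (J.biUnion Lf) := by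
    intro J
    induction J using Finset.induction_on with
    | empty => simp [phi]
    | insert _ _ hnotin =>
      rename_i j J ih
      rw [Finset.sum_insert hnotin, Finset.biUnion_insert, ih, hLphi j]
      rw [phi_union]
      exact Finset.disjoint_biUnion_right _ _ _ |>.2
        (fun j' hj' => hdisj j j' (fun h => hnotin (h ▸ hj')))
  -- dichotomy for unions of the Lf over nonempty index sets
  have hdich : (∀ J : Finset ℕ, J.Nonempty → J.biUnion Lf ∈ C) ∨
      (∀ J : Finset ℕ, J.Nonempty → J.biUnion Lf ∉ C) := by
    rcases hc with rfl | hceq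
    · left
      intro J hJ
      have : ∑ j ∈ J, b.get j ∈ Hindman.FS pw3 ∩ P := hb (Hindman.FS.finset_sum b J hJ)
      rcases this.2 with ⟨L', hL'C, hL'phi⟩
      rw [hsum J] at hL'phi
      rwa [phi_inj hL'phi] at hL'C
    · right
      rw [Set.mem_singleton_iff.1 hceq] at hb
      intro J hJ hJC
      have : ∑ j ∈ J, b.get j ∈ Hindman.FS pw3 \ P := hb (Hindman.FS.finset_sum b J hJ)
      exact this.2 ⟨_, hJC, (hsum J).symm⟩
  -- extract a block subsequence
  have hstep : ∀ p : ℕ, ∃ q, p < q ∧ ∀ x ∈ Lf p, ∀ y ∈ Lf q, x < y := by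
    intro p
    rcases exists_far Lf hdisj p ((Lf p).sup id) with ⟨q, hq1, hq2⟩
    refine ⟨q, hq1, fun x hx y hy => ?_⟩
    have hxle : x ≤ (Lf p).sup id := Finset.le_sup (f := id) hx
    have := hq2 y hy
    omega
  choose g hg1 hg2 using hstep
  set kap : ℕ → ℕ := fun m => g^[m] 0 with hkap
  have hkapsucc : ∀ m, kap (m + 1) = g (kap m) := by
    intro m
    rw [hkap]
    simp [Function.iterate_succ_apply']
  have hkmono : StrictMono kap := by
    apply strictMono_nat_of_lt_succ
    intro m
    rw [hkapsucc]
    exact hg1 _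
  have hcons : ∀ p, ∀ x ∈ Lf (kap p), ∀ y ∈ Lf (kap (p + 1)), x < y := by
    intro p x hx y hy
    rw [hkapsucc] at hy
    exact hg2 (kap p) x hx y hy
  have hblock : ∀ p q, p + 1 ≤ q → ∀ x ∈ Lf (kap p), ∀ y ∈ Lf (kap q), x < y := by
    intro p q hq
    induction q, hq using Nat.le_induction with
    | base => exact hcons p
    | succ q hq ih =>
      intro x hx y hy
      rcases hLne (kap q) with ⟨z, hz⟩
      exact lt_trans (ih x hx z hz) (hcons q z hz y hy)
  refine ⟨fun i : Fin n => Lf (kap i), ⟨fun i => hLne _, ?_⟩, ?_⟩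
  · intro i j hij x hx y hy
    exact hblock i j (by exact_mod_cast Nat.succ_le_of_lt hij) x hx y hy
  · have himg : ∀ J : Finset (Fin n), J.biUnion (fun i => Lf (kap i)) =
        (J.image (fun i : Fin n => kap i)).biUnion Lf := by
      intro J
      ext x
      simp [Finset.mem_biUnion]
    rcases hdich with h | h
    · left
      intro J hJ
      rw [himg]
      exact h _ (hJ.image _)
    · right
      intro J hJ
      rw [himg]
      exact h _ (hJ.image _)

end InfRamsey

section FinRamsey

open Filter

lemma block_ramsey_fin (n : ℕ) :
    ∃ r : ℕ, ∀ C : Set (Finset ℕ), ∃ K : Fin n → Finset ℕ, BlockSeq K ∧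
      (∀ i, ∀ x ∈ K i, x < r) ∧
      ((∀ J : Finset (Fin n), J.Nonempty → J.biUnion K ∈ C) ∨
       (∀ J : Finset (Fin n), J.Nonempty → J.biUnion K ∉ C)) := by
  classical
  by_contra hcon
  have h1 : ∀ r : ℕ, ∃ C : Set (Finset ℕ), ¬ (∃ K : Fin n → Finset ℕ, BlockSeq K ∧
      (∀ i, ∀ x ∈ K i, x < r) ∧
      ((∀ J : Finset (Fin n), J.Nonempty → J.biUnion K ∈ C) ∨
       (∀ J : Finset (Fin n), J.Nonempty → J.biUnion K ∉ C))) := by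
    intro r
    by_contra h2
    push_neg at h2
    exact hcon ⟨r, h2⟩
  choose Cv hCv using h1
  set U : Ultrafilter ℕ := Ultrafilter.of atTop with hUdef
  have hatTop : (U : Filter ℕ) ≤ atTop := Ultrafilter.of_le atTop
  set C : Set (Finset ℕ) := {L | {r | L ∈ Cv r} ∈ U} with hCdef
  obtain ⟨K, hK, hdich⟩ := block_ramsey_inf C n
  set R : ℕ := (Finset.univ.sup (fun i : Fin n => (K i).sup id)) + 1 with hRdef
  have hRbound : ∀ i, ∀ x ∈ K i, x < R := by
    intro i x hx
    have h1 : x ≤ (K i).sup id := Finset.le_sup (f := id) hx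
    have h2 : (K i).sup id ≤ Finset.univ.sup (fun i : Fin n => (K i).sup id) :=
      Finset.le_sup (f := fun i : Fin n => (K i).sup id) (Finset.mem_univ i)
    omega
  have hT : {r : ℕ | R ≤ r} ∈ U := hatTop (Filter.mem_atTop R)
  rcases hdich with hin | hout
  · have hS : (⋂ J ∈ {J : Finset (Fin n) | J.Nonempty}, {r | J.biUnion K ∈ Cv r}) ∈ U := by
      refine (Filter.biInter_mem (Set.toFinite _)).2 ?_
      intro J hJ
      exact hin J hJ
    have hmem : ((⋂ J ∈ {J : Finset (Fin n) | J.Nonempty}, {r | J.biUnion K ∈ Cv r})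
        ∩ {r : ℕ | R ≤ r}) ∈ U := Filter.inter_mem hS hT
    rcases Filter.nonempty_of_mem hmem with ⟨r, hr1, hr2⟩
    refine hCv r ⟨K, hK, fun i x hx => lt_of_lt_of_le (hRbound i x hx) hr2, Or.inl ?_⟩
    intro J hJ
    exact Set.mem_iInter₂.1 hr1 J hJ
  · have hS : (⋂ J ∈ {J : Finset (Fin n) | J.Nonempty}, {r | J.biUnion K ∉ Cv r}) ∈ U := by
      refine (Filter.biInter_mem (Set.toFinite _)).2 ?_
      intro J hJ
      have : {r | J.biUnion K ∈ Cv r} ∉ U := fun hmem => hout J hJ hmem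
      have := Ultrafilter.compl_mem_iff_notMem.2 this
      exact this
    have hmem : ((⋂ J ∈ {J : Finset (Fin n) | J.Nonempty}, {r | J.biUnion K ∉ Cv r})
        ∩ {r : ℕ | R ≤ r}) ∈ U := Filter.inter_mem hS hT
    rcases Filter.nonempty_of_mem hmem with ⟨r, hr1, hr2⟩
    refine hCv r ⟨K, hK, fun i x hx => lt_of_lt_of_le (hRbound i x hx) hr2, Or.inr ?_⟩
    intro J hJ
    exact Set.mem_iInter₂.1 hr1 J hJ

end FinRamsey

section Forward
variable {S : Type*} [Semigroup S]

lemma wd_decor' (f : ℕ → S) (s₀ b h : S) (lst : List ℕ) (hne : lst ≠ []) :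
    wd f h (decor s₀ lst b) = h * blockProd f s₀ lst * b := by
  rcases lst with _ | ⟨n, l⟩
  · exact absurd rfl hne
  · exact wd_decor f s₀ b n l h

lemma theta_ipr {A : Set S} (hA : IsCRSet A) (k : ℕ) :
    ∃ r : ℕ, ∀ F : Finset (ℕ → S), F.Nonempty → F.card ≤ k →
      ∀ H : Fin r → Finset ℕ, BlockSeq H →
        ∃ L ∈ Theta A F, ∃ J : Finset (Fin r), J.Nonempty ∧ L = J.biUnion H := by
  classical
  obtain ⟨r₀, hr₀⟩ := hA k
  refine ⟨r₀ + 1, ?_⟩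
  intro F hFne hFk H hH
  obtain ⟨f₀, hf₀⟩ := hFne
  set s₀ : S := f₀ 0 with hs₀
  set gf : (ℕ → S) → (ℕ → S) := fun f n =>
    if h : n < r₀ + 1 then blockProd f s₀ ((H ⟨n, h⟩).sort (· ≤ ·)) else s₀ with hgf
  obtain ⟨m, hm, a, t, htmono, htle, hword⟩ :=
    hr₀ (F.image gf) ⟨gf f₀, Finset.mem_image_of_mem gf hf₀⟩ (le_trans (Finset.card_image_le) hFk)
  set tF : Fin m → Fin (r₀ + 1) := fun i => ⟨t i, Nat.lt_succ_of_le (htle i)⟩ with htF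
  set sortH : Fin m → List ℕ := fun i => (H (tF i)).sort (· ≤ ·) with hsortH
  have hsortne : ∀ i, sortH i ≠ [] := by
    intro i hnil
    have h1 : (H (tF i)).card = 0 := by
      have h2 := congrArg List.length hnil
      simpa [hsortH, Finset.length_sort] using h2
    have := (hH.1 (tF i))
    rw [← Finset.card_pos] at this
    omega
  have hgval : ∀ f (i : Fin m), gf f (t i) = blockProd f s₀ (sortH i) := by
    intro f i
    rw [hgf]
    simpa using dif_pos (htle i)
  set l : List (ℕ × S) :=
    ((List.finRange m).map (fun i => decor s₀ (sortH i) (a i.succ))).flatten with hl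
  -- word identity
  have hflat : ∀ (idx : List (Fin m)) (h : S) (f : ℕ → S),
      wd (gf f) h (idx.map fun i => (t i, a i.succ)) =
        wd f h ((idx.map fun i => decor s₀ (sortH i) (a i.succ)).flatten) := by
    intro idx
    induction idx with
    | nil => intro h f; rfl
    | cons i idx ih =>
      intro h f
      rw [List.map_cons, List.map_cons, List.flatten_cons, wd_cons, wd_append]
      rw [wd_decor' f s₀ (a i.succ) h (sortH i) (hsortne i), ih, hgval]
  have hword' : ∀ f ∈ F, wd f (a 0) l ∈ A := by
    intro f hf
    have h1 := hword (gf f) (Finset.mem_image_of_mem gf hf)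
    rw [crWord_eq_wd, hflat (List.finRange m) (a 0) f] at h1
    exact h1
  -- the first coordinates
  have hfst : l.map Prod.fst = ((List.finRange m).map sortH).flatten := by
    rw [hl, List.map_flatten, List.map_map]
    congr 1
    apply List.map_congr_left
    intro i _
    exact decor_fst s₀ (sortH i) (a i.succ)
  have htFmono : StrictMono tF := by
    intro i j hij
    exact htmono hij
  have hsorted : (l.map Prod.fst).Pairwise (· < ·) := by
    rw [hfst]
    rw [List.pairwise_flatten]
    constructor
    · intro lst hlst
      rcases List.mem_map.1 hlst with ⟨i, _, rfl⟩
      exact (Finset.sortedLT_sort _).pairwise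
    · rw [List.pairwise_map]
      refine List.Pairwise.imp_of_mem ?_ (List.pairwise_lt_finRange m)
      intro i j _ _ hij x hx y hy
      rw [hsortH] at hx hy
      rw [Finset.mem_sort] at hx hy
      exact hH.2 (tF i) (tF j) (htFmono hij) x hx y hy
  have hlne : l ≠ [] := by
    intro hnil
    have := hsortne ⟨0, hm⟩
    have h2 : sortH ⟨0, hm⟩ ∈ (List.finRange m).map sortH :=
      List.mem_map_of_mem (f := sortH) (List.mem_finRange _)
    rcases List.exists_mem_of_ne_nil _ this with ⟨x, hx⟩
    have : x ∈ ((List.finRange m).map sortH).flatten := List.mem_flatten.2 ⟨_, h2, hx⟩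
    rw [← hfst, hnil] at this
    simp at this
  have hTheta := theta_of_list (a 0) l hlne hsorted hword'
  refine ⟨(l.map Prod.fst).toFinset, hTheta, Finset.univ.image tF, ?_, ?_⟩
  · have : (⟨0, hm⟩ : Fin m) ∈ (Finset.univ : Finset (Fin m)) := Finset.mem_univ _
    exact ⟨tF ⟨0, hm⟩, Finset.mem_image_of_mem tF this⟩
  · ext x
    rw [hfst]
    simp only [List.mem_toFinset, List.mem_flatten, List.mem_map, List.mem_finRange,
      Finset.mem_biUnion, Finset.mem_image, Finset.mem_univ, true_and]
    constructor
    · rintro ⟨lst, ⟨i, rfl⟩, hx⟩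
      exact ⟨tF i, ⟨i, rfl⟩, by rwa [hsortH, Finset.mem_sort] at hx⟩
    · rintro ⟨j, ⟨i, rfl⟩, hx⟩
      exact ⟨sortH i, ⟨i, rfl⟩, by rwa [hsortH, Finset.mem_sort]⟩

end Forward

section MainAux

lemma crWord_fst {S T : Type*} [Semigroup S] [Semigroup T] (m : ℕ)
    (c : Fin (m + 1) → S × T) (t : Fin m → ℕ) (f : ℕ → S × T) :
    (crWord m c t f).1 = crWord m (fun i => (c i).1) t (fun n => (f n).1) := by
  rw [crWord, crWord]
  exact (List.foldl_hom Prod.fst (init := c 0) (fun x y => rfl)).symm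

lemma crWord_snd {S T : Type*} [Semigroup S] [Semigroup T] (m : ℕ)
    (c : Fin (m + 1) → S × T) (t : Fin m → ℕ) (f : ℕ → S × T) :
    (crWord m c t f).2 = crWord m (fun i => (c i).2) t (fun n => (f n).2) := by
  rw [crWord, crWord]
  exact (List.foldl_hom Prod.snd (init := c 0) (fun x y => rfl)).symm

lemma biUnion_castLE {p n : ℕ} (hp : p ≤ n) (K : Fin n → Finset ℕ) (J : Finset (Fin p)) :
    J.biUnion (fun i => K (Fin.castLE hp i)) = (J.image (Fin.castLE hp)).biUnion K := by
  classical
  ext x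
  simp only [Finset.mem_biUnion, Finset.mem_image]
  constructor
  · rintro ⟨i, hi, hx⟩
    exact ⟨Fin.castLE hp i, ⟨i, hi, rfl⟩, hx⟩
  · rintro ⟨j, ⟨i, hi, rfl⟩, hx⟩
    exact ⟨i, hi, hx⟩

lemma blockSeq_castLE {p n : ℕ} (hp : p ≤ n) {K : Fin n → Finset ℕ} (hK : BlockSeq K) :
    BlockSeq (fun i : Fin p => K (Fin.castLE hp i)) := by
  refine ⟨fun i => hK.1 _, fun i j hij x hx y hy => ?_⟩
  exact hK.2 (Fin.castLE hp i) (Fin.castLE hp j) (by simpa using hij) x hx y hy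

end MainAux


theorem cr_prod {S T : Type*} [Semigroup S] [Semigroup T] {A : Set S} {B : Set T}
    (hA : IsCRSet A) (hB : IsCRSet B) : IsCRSet (A ×ˢ B) := by
  classical
  intro k
  obtain ⟨rA, hrA⟩ := theta_ipr hA k
  obtain ⟨rB, hrB⟩ := theta_ipr hB k
  set n : ℕ := max rA rB with hn
  obtain ⟨r, hr⟩ := block_ramsey_fin n
  refine ⟨r, ?_⟩
  intro F hFne hFk
  set F1 : Finset (ℕ → S) := F.image (fun f n => (f n).1) with hF1
  set F2 : Finset (ℕ → T) := F.image (fun f n => (f n).2) with hF2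
  have hF1ne : F1.Nonempty := hFne.image _
  have hF2ne : F2.Nonempty := hFne.image _
  have hF1k : F1.card ≤ k := le_trans Finset.card_image_le hFk
  have hF2k : F2.card ≤ k := le_trans Finset.card_image_le hFk
  obtain ⟨K, hK, hKbound, hdich⟩ := hr (Theta A F1)
  have hAll : ∀ J : Finset (Fin n), J.Nonempty → J.biUnion K ∈ Theta A F1 := by
    rcases hdich with h | h
    · exact h
    · exfalso
      obtain ⟨L, hLTheta, J, hJne, hLeq⟩ := hrA F1 hF1ne hF1k
        (fun i : Fin rA => K (Fin.castLE (le_max_left rA rB) i))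
        (blockSeq_castLE _ hK)
      refine h (J.image (Fin.castLE (le_max_left rA rB))) (hJne.image _) ?_
      rw [← biUnion_castLE, ← hLeq]
      exact hLTheta
  obtain ⟨L, hLThetaB, J, hJne, hLeq⟩ := hrB F2 hF2ne hF2k
    (fun i : Fin rB => K (Fin.castLE (le_max_right rA rB) i))
    (blockSeq_castLE _ hK)
  have hLThetaA : L ∈ Theta A F1 := by
    rw [hLeq, biUnion_castLE]
    exact hAll _ (hJne.image _)
  obtain ⟨hLne, aS, haS⟩ := hLThetaA
  obtain ⟨-, aT, haT⟩ := hLThetaB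
  have hLbound : ∀ x ∈ L, x < r := by
    intro x hx
    rw [hLeq] at hx
    rcases Finset.mem_biUnion.1 hx with ⟨j, _, hxj⟩
    exact hKbound _ x hxj
  refine ⟨L.card, Finset.card_pos.2 hLne, fun i => (aS i, aT i),
    fun i => ((L.orderIsoOfFin rfl) i : ℕ), ?_, ?_, ?_⟩
  · have : (fun i : Fin L.card => ((L.orderIsoOfFin rfl) i : ℕ)) = L.orderEmbOfFin rfl :=
      funext fun i => Finset.coe_orderIsoOfFin_apply L rfl i
    rw [this]
    exact (L.orderEmbOfFin rfl).strictMono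
  · intro i
    have : ((L.orderIsoOfFin rfl) i : ℕ) ∈ L := ((L.orderIsoOfFin rfl) i).2
    exact le_of_lt (hLbound _ this)
  · intro f hf
    rw [Set.mem_prod, crWord_fst, crWord_snd]
    constructor
    · exact haS _ (Finset.mem_image_of_mem _ hf)
    · exact haT _ (Finset.mem_image_of_mem _ hf)
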